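/- Let f : 𝕆 → 𝕆 be left para-linear and suppose x ∈ 𝕆 lies in the nucleus of 𝕆 (i.e. [p,q,x] = 0 for all p,q ∈ 𝕆, so x is real). Then f(px) = p·f(x) for all p ∈ 𝕆. -/

import Mathlib

noncomputable section

open Quaternion

/-- The octonions, as the Cayley–Dickson double of the quaternions. -/
def Octo : Type := ℍ × ℍ

namespace Octo

instance : AddCommGroup Octo := inferInstanceAs (AddCommGroup (ℍ × ℍ))
instance : Module ℝ Octo := inferInstanceAs (Module ℝ (ℍ × ℍ))

/-- Cayley–Dickson multiplication: (a,b)(c,d) = (ac − d̄b, da + bc̄). -/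
instance : Mul Octo :=
  ⟨fun x y => ((x.1 * y.1 - star y.2 * x.2, y.2 * x.1 + x.2 * star y.1) : ℍ × ℍ)⟩

/-- Octonionic conjugation. -/
def conj (x : Octo) : Octo := ((star x.1, -x.2) : ℍ × ℍ)

/-- Real part. -/
def re (x : Octo) : ℝ := x.1.re

/-- Squared norm. -/
def normSq (x : Octo) : ℝ := re (x * conj x)

/-- The standard basis e₀ = 1, e₁, …, e₇. -/
def e : Fin 8 → Octo :=
  ![((1, 0) : ℍ × ℍ), ((⟨0,1,0,0⟩, 0) : ℍ × ℍ), ((⟨0,0,1,0⟩, 0) : ℍ × ℍ),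
    ((⟨0,0,0,1⟩, 0) : ℍ × ℍ), ((0, 1) : ℍ × ℍ), ((0, ⟨0,1,0,0⟩) : ℍ × ℍ),
    ((0, ⟨0,0,1,0⟩) : ℍ × ℍ), ((0, ⟨0,0,0,1⟩) : ℍ × ℍ)]

/-- Inverse: p⁻¹ = conj p / |p|². -/
def inv (x : Octo) : Octo := (normSq x)⁻¹ • conj x

/-- The associator [a,b,c] = (ab)c − a(bc). -/
def assoc (a b c : Octo) : Octo := a * b * c - a * (b * c)

/-- Left para-linear map: ℝ-linear with Re(f(px) − p f(x)) = 0. -/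
def IsParaLinear (f : Octo → Octo) : Prop :=
  IsLinearMap ℝ f ∧ ∀ p x : Octo, re (f (p * x) - p * f x) = 0

/- ### Auxiliary lemmas -/

lemma mul_def' (x y : Octo) :
    x * y = ((x.1 * y.1 - star y.2 * x.2, y.2 * x.1 + x.2 * star y.1) : ℍ × ℍ) := rfl

lemma ext_iff' (a b : Octo) : a = b ↔ a.1 = b.1 ∧ a.2 = b.2 := Prod.ext_iff

lemma sub_def' (a b : Octo) : a - b = ((a.1 - b.1, a.2 - b.2) : ℍ × ℍ) := rfl

lemma mul_mk (a b c d : ℍ) : @HMul.hMul Octo Octo Octo _ (a, b) (c, d) =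
    ((a * c - star d * b, d * a + b * star c) : ℍ × ℍ) := rfl

lemma sub_mk (a b c d : ℍ) : @HSub.hSub Octo Octo Octo _ (a, b) (c, d) =
    ((a - c, b - d) : ℍ × ℍ) := rfl

/-- A quaternion literal, typed as `ℍ`. -/
def qmk (a b c d : ℝ) : ℍ := ⟨a, b, c, d⟩

lemma qa_mk (a b c d : ℝ) : (⟨a, b, c, d⟩ : ℍ) = qmk a b c d := rfl

@[simp] lemma qmk_re (a b c d : ℝ) : (qmk a b c d).re = a := rfl
@[simp] lemma qmk_imI (a b c d : ℝ) : (qmk a b c d).imI = b := rfl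
@[simp] lemma qmk_imJ (a b c d : ℝ) : (qmk a b c d).imJ = c := rfl
@[simp] lemma qmk_imK (a b c d : ℝ) : (qmk a b c d).imK = d := rfl

lemma ext_mk (a b c d : ℍ) : @Eq Octo (a, b) (c, d) ↔ a = c ∧ b = d := Prod.ext_iff

lemma smul_def' (r : ℝ) (a : Octo) : r • a = ((r • a.1, r • a.2) : ℍ × ℍ) := rfl

/-- The multiplicative unit (1,0). -/
def one : Octo := ((1, 0) : ℍ × ℍ)

lemma mul_one' (p : Octo) : p * one = p := by
  rw [ext_iff']; simp only [mul_def']; simp [one]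

lemma re_sub (a b : Octo) : re (a - b) = re a - re b := by
  simp [re, sub_def']

lemma mul_sub' (q a b : Octo) : q * (a - b) = q * a - q * b := by
  rw [ext_iff']; simp only [mul_def']; simp [sub_def', sub_mk]; constructor <;> noncomm_ring

/-- Associativity of the trace form. -/
lemma re_assoc (q p w : Octo) : re (q * (p * w)) = re ((q * p) * w) := by
  obtain ⟨q1, q2⟩ := q; obtain ⟨p1, p2⟩ := p; obtain ⟨w1, w2⟩ := w
  simp only [mul_mk, re]
  simp [Quaternion.re_mul, Quaternion.imI_mul, Quaternion.imJ_mul, Quaternion.imK_mul]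
  ring

/-- Nondegeneracy of the trace pairing. -/
lemma nondeg (a : Octo) (h : ∀ q : Octo, re (q * a) = 0) : a = 0 := by
  obtain ⟨a1, a2⟩ := a
  have h1 := h ((1,0) : ℍ × ℍ)
  have h2 := h ((⟨0,1,0,0⟩,0) : ℍ × ℍ)
  have h3 := h ((⟨0,0,1,0⟩,0) : ℍ × ℍ)
  have h4 := h ((⟨0,0,0,1⟩,0) : ℍ × ℍ)
  have h5 := h ((0,1) : ℍ × ℍ)
  have h6 := h ((0,⟨0,1,0,0⟩) : ℍ × ℍ)
  have h7 := h ((0,⟨0,0,1,0⟩) : ℍ × ℍ)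
  have h8 := h ((0,⟨0,0,0,1⟩) : ℍ × ℍ)
  simp only [qa_mk, mul_mk, re] at h1 h2 h3 h4 h5 h6 h7 h8
  simp [Quaternion.re_mul, Quaternion.ext_iff] at h1 h2 h3 h4 h5 h6 h7 h8
  have h0 : (0 : Octo) = ((0,0) : ℍ × ℍ) := rfl
  rw [h0]; refine Prod.ext_iff.2 ?_
  constructor <;> · rw [Quaternion.ext_iff]; simp; constructorm* _ ∧ _ <;> linarith

set_option maxHeartbeats 1000000 in
/-- Any element of the nucleus is real. -/
lemma real_of_nucleus (x : Octo) (hx : ∀ p q : Octo, assoc p q x = 0) :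
    x = (((x.1.re : ℝ) : ℍ), 0) := by
  obtain ⟨x1, x2⟩ := x
  have h1 := hx ((⟨0,1,0,0⟩,0) : ℍ × ℍ) ((⟨0,0,1,0⟩,0) : ℍ × ℍ)
  have h2 := hx ((0,1) : ℍ × ℍ) ((⟨0,1,0,0⟩,0) : ℍ × ℍ)
  have h3 := hx ((0,1) : ℍ × ℍ) ((⟨0,0,1,0⟩,0) : ℍ × ℍ)
  simp only [assoc, sub_eq_zero, ext_iff'] at h1 h2 h3; simp only [qa_mk, mul_mk] at h1 h2 h3
  simp [Quaternion.ext_iff, Quaternion.re_mul,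
    Quaternion.imI_mul, Quaternion.imJ_mul, Quaternion.imK_mul] at h1 h2 h3
  refine (ext_iff' _ _).2 ?_
  constructor <;> · rw [Quaternion.ext_iff]; simp; constructorm* _ ∧ _ <;> linarith

/-- A para-linear map satisfies f p = p * f 1. -/
lemma paraLinear_eq (f : Octo → Octo) (hf : IsParaLinear f) (p : Octo) :
    f p = p * f one := by
  have key : ∀ q : Octo, re (q * (f p - p * f one)) = 0 := by
    intro q
    rw [mul_sub', re_sub]
    have e1 : re (q * f p) = re (f (q * p)) := by
      have := hf.2 q p; rw [re_sub] at this; linarith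
    have e2 : re (q * (p * f one)) = re (f (q * p)) := by
      rw [re_assoc]
      have := hf.2 (q * p) one; rw [re_sub, mul_one'] at this; linarith
    rw [e1, e2]; ring
  have h := nondeg _ key
  rwa [sub_eq_zero] at h

end Octo

theorem stmt19 (f : Octo → Octo) (hf : Octo.IsParaLinear f) (x : Octo)
    (hx : ∀ p q : Octo, Octo.assoc p q x = 0) :
    ∀ p : Octo, f (p * x) = p * f x := by
  intro p
  have hxr := Octo.real_of_nucleus x hx
  set r := x.1.re with hr
  have hx1 : x = r • Octo.one := by
    rw [hxr]; refine (Octo.ext_iff' _ _).2 ?_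
    constructor
    · show ((r : ℍ)) = r • (1 : ℍ)
      rw [Quaternion.ext_iff]; simp
    · show (0 : ℍ) = r • (0 : ℍ); simp
  have hmul : ∀ w : Octo, w * x = r • w := by
    intro w
    rw [hxr, Octo.ext_iff', Octo.smul_def']
    constructor
    · show w.1 * (r : ℍ) - star (0:ℍ) * w.2 = r • w.1
      simp [Quaternion.mul_coe_eq_smul]
    · show (0:ℍ) * w.1 + w.2 * star ((r : ℍ)) = r • w.2
      simp [Quaternion.mul_coe_eq_smul]
  have hsm : ∀ w : Octo, p * (r • w) = r • (p * w) := by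
    intro w
    rw [Octo.ext_iff', Octo.smul_def', Octo.smul_def']
    constructor
    · show p.1 * (r • w.1) - star (r • w.2) * p.2 = r • (p.1 * w.1 - star w.2 * p.2)
      simp [mul_smul_comm, smul_mul_assoc, smul_sub, Quaternion.star_smul]
    · show (r • w.2) * p.1 + p.2 * star (r • w.1) = r • (w.2 * p.1 + p.2 * star w.1)
      simp [mul_smul_comm, smul_mul_assoc, smul_add, Quaternion.star_smul]
  calc f (p * x) = f (r • p) := by rw [hmul p]
    _ = r • f p := hf.1.map_smul r p
    _ = r • (p * f Octo.one) := by rw [Octo.paraLinear_eq f hf p]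
    _ = p * (r • f Octo.one) := (hsm _).symm
    _ = p * f (r • Octo.one) := by rw [hf.1.map_smul r Octo.one]
    _ = p * f x := by rw [← hx1]
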